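/- Existential local preservation under extensions: Let σ be a finite relational signature and let C be a hereditary class of finite σ-structures such that for all r, k ≥ 0 preservation under extensions holds over Balls(C,r,k). Then every existential local sentence that is preserved under extensions over C is equivalent over C to an existential sentence. -/

import Mathlib

open FirstOrder FirstOrder.Language

universe u v w

namespace Gaifman

/-- Two elements are adjacent in the Gaifman graph of a structure: they are distinct and
occur together in some tuple belonging to some relation. -/
def Adj (L : FirstOrder.Language.{u, u}) (M : Type u) [L.Structure M] (a b : M) : Prop :=
  a ≠ b ∧ ∃ (n : ℕ) (R : L.Relations n) (t : Fin n → M),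
    Structure.RelMap R t ∧ a ∈ Set.range t ∧ b ∈ Set.range t

/-- `CloseLE L M r a b` holds iff the Gaifman distance from `a` to `b` is at most `r`. -/
def CloseLE (L : FirstOrder.Language.{u, u}) (M : Type u) [L.Structure M] :
    ℕ → M → M → Prop
  | 0, a, b => a = b
  | r + 1, a, b => CloseLE L M r a b ∨ ∃ c, CloseLE L M r a c ∧ Adj L M c b

lemma closeLE_self (L : FirstOrder.Language.{u, u}) (M : Type u) [L.Structure M] :
    ∀ (r : ℕ) (a : M), CloseLE L M r a a
  | 0, _ => rfl
  | r + 1, a => Or.inl (closeLE_self L M r a)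

/-- The `r`-neighborhood of a tuple: all elements at Gaifman distance at most `r`
from some component of the tuple. -/
def Ball (L : FirstOrder.Language.{u, u}) {M : Type u} [L.Structure M] {m : ℕ}
    (a : Fin m → M) (r : ℕ) : Set M :=
  {x | ∃ i, CloseLE L M r (a i) x}

lemma self_mem_ball (L : FirstOrder.Language.{u, u}) {M : Type u} [L.Structure M] {m : ℕ}
    (a : Fin m → M) (r : ℕ) (i : Fin m) :
    a i ∈ Ball L a r := ⟨i, closeLE_self L M r (a i)⟩

/-- The substructure induced on a subset of a structure over a relational language. -/
def inducedStructure (L : FirstOrder.Language.{u, u}) [L.IsRelational] {M : Type u}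
    [L.Structure M] (s : Set M) : L.Structure s where
  funMap {n} f _ := isEmptyElim f
  RelMap {n} R t := Structure.RelMap R fun i => (t i : M)

/-- A formula is `r`-local if its truth at a tuple only depends on the induced substructure on
the `r`-neighborhood of the tuple. -/
def IsLocal {L : FirstOrder.Language.{u, u}} [L.IsRelational] (r : ℕ) {m : ℕ}
    (φ : L.Formula (Fin m)) : Prop :=
  ∀ (M : Type u) [L.Structure M] (a : Fin m → M),
    φ.Realize a ↔
      (letI := inducedStructure L (Ball L a r)
       φ.Realize fun i => (⟨a i, self_mem_ball L a r i⟩ : Ball L a r))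

/-- Quantifier rank of a (bounded) formula. -/
def qr {L : FirstOrder.Language.{u, u}} {α : Type v} : ∀ {n : ℕ}, L.BoundedFormula α n → ℕ
  | _, .falsum => 0
  | _, .equal _ _ => 0
  | _, .rel _ _ => 0
  | _, .imp f g => max (qr f) (qr g)
  | _, .all f => qr f + 1

/-- The components of a tuple are at pairwise Gaifman distance greater than `s`. -/
def Far (L : FirstOrder.Language.{u, u}) (M : Type u) [L.Structure M] (s : ℕ) {m : ℕ}
    (a : Fin m → M) : Prop :=
  ∀ i j : Fin m, i ≠ j → ¬ CloseLE L M s (a i) (a j)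

/-- `A ≼_{r,q,k} B` : every sentence `∃ x₁ … x_k, τ` with `τ` an `r`-local formula of
quantifier rank at most `q` that holds in `A` also holds in `B`. -/
def LocLE (L : FirstOrder.Language.{u, u}) [L.IsRelational] (r q k : ℕ) (M N : Type u)
    [L.Structure M] [L.Structure N] : Prop :=
  ∀ τ : L.Formula (Fin k), IsLocal r τ → qr τ ≤ q →
    (∃ a : Fin k → M, τ.Realize a) → ∃ b : Fin k → N, τ.Realize b

/-- The preorder `≼_{r,q,k}` with radius and rank parameters in `ℕ ∪ {∞}`: the intersection
over all finite parameters below the given ones. -/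
def LocLEE (L : FirstOrder.Language.{u, u}) [L.IsRelational] (r q : ℕ∞) (k : ℕ)
    (M N : Type u) [L.Structure M] [L.Structure N] : Prop :=
  ∀ r' q' : ℕ, (r' : ℕ∞) ≤ r → (q' : ℕ∞) ≤ q → LocLE L r' q' k M N

/-- Local elementary embedding. -/
def IsLocalElemEmb (L : FirstOrder.Language.{u, u}) [L.IsRelational] {M N : Type u}
    [L.Structure M] [L.Structure N] (h : M → N) : Prop :=
  ∀ (k r : ℕ) (a : Fin k → M) (φ : L.Formula (Fin k)), IsLocal r φ →
    (φ.Realize a ↔ φ.Realize (h ∘ a))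

/-- Disjoint union of two structures over a relational language. -/
def sumStructure (L : FirstOrder.Language.{u, u}) [L.IsRelational] (M N : Type u)
    [L.Structure M] [L.Structure N] : L.Structure (M ⊕ N) where
  funMap {n} f _ := isEmptyElim f
  RelMap {n} R t :=
    (∃ tm : Fin n → M, t = Sum.inl ∘ tm ∧ Structure.RelMap R tm) ∨
    (∃ tn : Fin n → N, t = Sum.inr ∘ tn ∧ Structure.RelMap R tn)

/-- A bundled `L`-structure. -/
structure Struc (L : FirstOrder.Language.{u, u}) : Type (u + 1) where
  carrier : Type u
  str : L.Structure carrier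

attribute [instance] Struc.str

/-- The `(q,r)`-local type of a tuple. -/
def localType (L : FirstOrder.Language.{u, u}) [L.IsRelational] (r q : ℕ) {M : Type u}
    [L.Structure M] {m : ℕ} (a : Fin m → M) : Set (L.Formula (Fin m)) :=
  {τ | IsLocal r τ ∧ qr τ ≤ q ∧ τ.Realize a}

/-- The collection of `(q,r)`-local types of tuples of at most `k` elements. -/
def Specter (L : FirstOrder.Language.{u, u}) [L.IsRelational] (r q k : ℕ) (M : Type u)
    [L.Structure M] : Set (Σ m : ℕ, Set (L.Formula (Fin m))) :=
  {p | ∃ m, m ≤ k ∧ ∃ a : Fin m → M, p = ⟨m, localType L r q a⟩}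

/-- The data of a basic local sentence
`∃ x₁ … x_k, (⋀_{i ≠ j} d(xᵢ,xⱼ) > 2r ∧ ⋀ᵢ ψ(xᵢ))`. -/
structure BasicLocal (L : FirstOrder.Language.{u, u}) [L.IsRelational] where
  k : ℕ
  r : ℕ
  ψ : L.Formula (Fin 1)
  isLocal : IsLocal r ψ

/-- Truth of a basic local sentence in a structure. -/
def BasicLocal.Holds {L : FirstOrder.Language.{u, u}} [L.IsRelational] (b : BasicLocal L)
    (M : Type u) [L.Structure M] : Prop :=
  ∃ a : Fin b.k → M, Far L M (2 * b.r) a ∧ ∀ i, b.ψ.Realize fun _ => a i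

/-- The data of an asymmetric basic local sentence
`∃ x₁ … x_k, (⋀_{i ≠ j} d(xᵢ,xⱼ) > 2r ∧ ⋀ᵢ ψᵢ(xᵢ))`. -/
structure AsymBasicLocal (L : FirstOrder.Language.{u, u}) [L.IsRelational] where
  k : ℕ
  r : ℕ
  ψ : Fin k → L.Formula (Fin 1)
  isLocal : ∀ i, IsLocal r (ψ i)

/-- Truth of an asymmetric basic local sentence in a structure. -/
def AsymBasicLocal.Holds {L : FirstOrder.Language.{u, u}} [L.IsRelational]
    (d : AsymBasicLocal L) (M : Type u) [L.Structure M] : Prop :=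
  ∃ a : Fin d.k → M, Far L M (2 * d.r) a ∧ ∀ i, (d.ψ i).Realize fun _ => a i

/-- Positive Boolean combinations (conjunction and disjunction only). -/
inductive PosBool (α : Type w) : Type w
  | base : α → PosBool α
  | conj : PosBool α → PosBool α → PosBool α
  | disj : PosBool α → PosBool α → PosBool α

/-- Evaluation of a positive Boolean combination against a truth assignment. -/
def PosBool.Eval {α : Type w} (v : α → Prop) : PosBool α → Prop
  | .base a => v a
  | .conj p q => p.Eval v ∧ q.Eval v
  | .disj p q => p.Eval v ∨ q.Eval v

/-- `φ` is equivalent over the class `C` to an existential local sentence `∃ x⃗, τ(x⃗)`. -/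
def EquivToExistLocal {L : FirstOrder.Language.{u, u}} [L.IsRelational]
    (C : Set (Struc L)) (φ : L.Sentence) : Prop :=
  ∃ (k r : ℕ) (τ : L.Formula (Fin k)), IsLocal r τ ∧
    ∀ S ∈ C, (S.carrier ⊨ φ ↔ ∃ a : Fin k → S.carrier, τ.Realize a)

/-- `A ⊆ᵢ B` : `A` is isomorphic to an induced substructure of `B`. -/
def SubInd {L : FirstOrder.Language.{u, u}} (A B : Struc L) : Prop :=
  Nonempty (A.carrier ↪[L] B.carrier)

/-- A hereditary class: closed under induced substructures. -/
def Hereditary {L : FirstOrder.Language.{u, u}} (C : Set (Struc L)) : Prop :=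
  ∀ B ∈ C, ∀ A : Struc L, SubInd A B → A ∈ C

/-- `φ` is preserved under extensions over `C`. -/
def PreservedUnderExt {L : FirstOrder.Language.{u, u}} (C : Set (Struc L))
    (φ : L.Sentence) : Prop :=
  ∀ A ∈ C, ∀ B ∈ C, A.carrier ⊨ φ → SubInd A B → B.carrier ⊨ φ

/-- `C` is closed under disjoint unions with finite structures. -/
def ClosedUnderDisjointUnions {L : FirstOrder.Language.{u, u}} [L.IsRelational]
    (C : Set (Struc L)) : Prop :=
  ∀ A ∈ C, ∀ B : Struc L, Finite B.carrier →
    (⟨A.carrier ⊕ B.carrier, sumStructure L A.carrier B.carrier⟩ : Struc L) ∈ C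

/-- `Balls(C, r, k)` : the structures isomorphic to an `r`-neighborhood of a tuple of at most
`k` elements of a structure of `C`. -/
def BallsClass {L : FirstOrder.Language.{u, u}} [L.IsRelational] (C : Set (Struc L))
    (r k : ℕ) : Set (Struc L) :=
  {T | ∃ A ∈ C, ∃ m, m ≤ k ∧ ∃ a : Fin m → A.carrier,
    letI := inducedStructure L (Ball L a r)
    Nonempty (T.carrier ≃[L] ↥(Ball L a r))}

/-- A `⊆ᵢ`-minimal model of `φ` in `C`: a model in `C` no proper induced substructure of
which satisfies `φ`. -/
def IsMinimalModel {L : FirstOrder.Language.{u, u}} [L.IsRelational] (C : Set (Struc L))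
    (φ : L.Sentence) (A : Struc L) : Prop :=
  A ∈ C ∧ A.carrier ⊨ φ ∧
    ∀ s : Set A.carrier,
      (letI := inducedStructure L s
       (↥s) ⊨ φ) → s = Set.univ

/-- Preservation under extensions holds over the class `D`: every sentence preserved under
extensions over `D` is equivalent over `D` to an existential sentence. -/
def PresExtHolds {L : FirstOrder.Language.{u, u}} [L.IsRelational]
    (D : Set (Struc L)) : Prop :=
  ∀ φ : L.Sentence, PreservedUnderExt D φ →
    ∃ (n : ℕ) (θ : L.Formula (Fin n)), θ.IsQF ∧
      ∀ S ∈ D, (S.carrier ⊨ φ ↔ ∃ a : Fin n → S.carrier, θ.Realize a)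

end Gaifman

open Gaifman

namespace Gaifman

variable {L : FirstOrder.Language.{u, u}}

section Basics

variable [L.IsRelational]

/-- Maximal arity of a relation symbol. -/
noncomputable def maxAr (L : FirstOrder.Language.{u, u}) [Finite (Σ n, L.Relations n)] : ℕ :=
  letI : Fintype (Σ n, L.Relations n) := Fintype.ofFinite _
  Finset.univ.sup (fun p : (Σ n, L.Relations n) => p.1)

lemma arity_le_maxAr [Finite (Σ n, L.Relations n)] {n : ℕ} (R : L.Relations n) :
    n ≤ maxAr L := by
  classical
  letI : Fintype (Σ n, L.Relations n) := Fintype.ofFinite _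
  have : (⟨n, R⟩ : Σ n, L.Relations n).1 ≤ Finset.univ.sup (fun p : (Σ n, L.Relations n) => p.1) :=
    Finset.le_sup (Finset.mem_univ _)
  simpa [maxAr] using this

/-- Quantifier-free formulas transfer along embeddings. -/
lemma qf_realize_emb {M N : Type u} [L.Structure M] [L.Structure N] (e : M ↪[L] N)
    {α : Type v} {n : ℕ} {φ : L.BoundedFormula α n} (h : φ.IsQF) (v : α → M)
    (xs : Fin n → M) :
    φ.Realize (e ∘ v) (e ∘ xs) ↔ φ.Realize v xs := by
  induction h with
  | falsum => exact Iff.rfl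
  | of_isAtomic h =>
    cases h with
    | equal t₁ t₂ =>
      simp only [BoundedFormula.realize_bdEqual, ← Sum.comp_elim,
        FirstOrder.Language.HomClass.realize_term]
      exact e.injective.eq_iff
    | rel R ts =>
      simp only [BoundedFormula.realize_rel, ← Sum.comp_elim,
        FirstOrder.Language.HomClass.realize_term]
      exact e.map_rel' R _
  | imp _ _ ih₁ ih₂ => simp only [BoundedFormula.realize_imp, ih₁, ih₂]

lemma qf_realize_emb_formula {M N : Type u} [L.Structure M] [L.Structure N] (e : M ↪[L] N)
    {α : Type v} {φ : L.Formula α} (h : φ.IsQF) (v : α → M) :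
    φ.Realize (e ∘ v) ↔ φ.Realize v := by
  have := qf_realize_emb e h v (default : Fin 0 → M)
  unfold FirstOrder.Language.Formula.Realize
  convert this using 2 <;> exact Subsingleton.elim _ _

/-- The inclusion of an induced substructure. -/
def subEmb [L.IsRelational] {M : Type u} [L.Structure M] (s : Set M) :
    letI := inducedStructure L s
    (↥s) ↪[L] M :=
  letI := inducedStructure L s
  { toFun := Subtype.val
    inj' := Subtype.val_injective
    map_fun' := fun f => isEmptyElim f
    map_rel' := fun _ _ => Iff.rfl }

@[simp] lemma subEmb_apply {M : Type u} [L.Structure M] (s : Set M) (x : ↥s) :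
    subEmb (L := L) s x = (x : M) := rfl

/-- The inclusion between two induced substructures. -/
def inclEmb {M : Type u} [L.Structure M] {s t : Set M} (h : s ⊆ t) :
    letI := inducedStructure L s
    letI := inducedStructure L t
    (↥s) ↪[L] (↥t) :=
  letI := inducedStructure L s
  letI := inducedStructure L t
  { toFun := Set.inclusion h
    inj' := Set.inclusion_injective h
    map_fun' := fun f => isEmptyElim f
    map_rel' := fun _ _ => Iff.rfl }

/-- If a set is everything, the whole structure is equivalent to the induced structure on it. -/
def equivSetUniv {M : Type u} [L.Structure M] (s : Set M) (hs : ∀ x, x ∈ s) :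
    letI := inducedStructure L s
    M ≃[L] (↥s) :=
  letI := inducedStructure L s
  { toFun := fun x => ⟨x, hs x⟩
    invFun := Subtype.val
    left_inv := fun _ => rfl
    right_inv := fun _ => rfl
    map_fun' := fun f => isEmptyElim f
    map_rel' := fun _ _ => Iff.rfl }

end Basics

end Gaifman

namespace Gaifman

variable {L : FirstOrder.Language.{u, u}}

section Extract

variable [L.IsRelational] [Finite (Σ n, L.Relations n)]

lemma closeLE_zero {M : Type u} [L.Structure M] {a b : M} :
    CloseLE L M 0 a b ↔ a = b := Iff.rfl

lemma closeLE_succ {M : Type u} [L.Structure M] {r : ℕ} {a b : M} :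
    CloseLE L M (r + 1) a b ↔
      CloseLE L M r a b ∨ ∃ c, CloseLE L M r a c ∧ Adj L M c b := Iff.rfl

lemma closeLE_of_eq {M : Type u} [L.Structure M] {a b : M} (h : a = b) :
    ∀ r, CloseLE L M r a b := fun r => h ▸ closeLE_self L M r a

/-- Witness extraction: from `CloseLE L M r x y` one extracts a small set `W` containing `x`
and `y`, all whose elements are within distance `r` of `x` both in `M` and in the structure
induced on any subset containing `W`. -/
lemma extract {M : Type u} [L.Structure M] :
    ∀ (r : ℕ) (x y : M), CloseLE L M r x y →
      ∃ W : Finset M, x ∈ W ∧ y ∈ W ∧ W.card ≤ 1 + r * maxAr L ∧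
        (∀ w ∈ W, CloseLE L M r x w) ∧
        (∀ (Z : Set M), ↑W ⊆ Z → ∀ w ∈ W, ∀ (hx : x ∈ Z) (hw : w ∈ Z),
          letI := inducedStructure L Z
          CloseLE L (↥Z) r ⟨x, hx⟩ ⟨w, hw⟩) := by
  classical
  intro r
  induction r with
  | zero =>
    intro x y hxy
    refine ⟨{x}, Finset.mem_singleton_self x, ?_, by simp, ?_, ?_⟩
    · simpa [Finset.mem_singleton] using hxy.symm
    · intro w hw
      rw [Finset.mem_singleton] at hw
      exact closeLE_of_eq hw.symm 0
    · intro Z hZ w hw hx hw'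
      rw [Finset.mem_singleton] at hw
      exact Subtype.ext hw.symm
  | succ r ih =>
    intro x y hxy
    rcases hxy with h | ⟨c, hxc, hadj⟩
    · obtain ⟨W, hxW, hyW, hcard, hM, hZ⟩ := ih x y h
      refine ⟨W, hxW, hyW, ?_, ?_, ?_⟩
      · exact hcard.trans (by nlinarith [Nat.zero_le (maxAr L)])
      · intro w hw; exact Or.inl (hM w hw)
      · intro Z hWZ w hw hx hw'
        exact Or.inl (hZ Z hWZ w hw hx hw')
    · obtain ⟨W₀, hxW₀, hcW₀, hcard₀, hM₀, hZ₀⟩ := ih x c hxc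
      obtain ⟨hne, n, R, t, hRt, hct, hyt⟩ := hadj
      refine ⟨W₀ ∪ Finset.image t Finset.univ, Finset.mem_union_left _ hxW₀, ?_, ?_, ?_, ?_⟩
      · obtain ⟨i, hi⟩ := hyt
        exact Finset.mem_union_right _ (Finset.mem_image.2 ⟨i, Finset.mem_univ _, hi⟩)
      · calc (W₀ ∪ Finset.image t Finset.univ).card
            ≤ W₀.card + (Finset.image t Finset.univ).card := Finset.card_union_le _ _
          _ ≤ (1 + r * maxAr L) + n := by
              gcongr
              exact Finset.card_image_le.trans (by simp)
          _ ≤ 1 + (r + 1) * maxAr L := by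
              have := arity_le_maxAr R
              nlinarith
      · intro w hw
        rcases Finset.mem_union.1 hw with hw | hw
        · exact Or.inl (hM₀ w hw)
        · obtain ⟨i, -, hi⟩ := Finset.mem_image.1 hw
          by_cases hwc : w = c
          · exact Or.inl (hwc ▸ hM₀ c hcW₀)
          · exact Or.inr ⟨c, hM₀ c hcW₀,
              fun h => hwc h.symm, n, R, t, hRt, hct, ⟨i, hi⟩⟩
      · intro Z hWZ w hw hx hw'
        have hW₀Z : ↑W₀ ⊆ Z := fun z hz => hWZ (Finset.mem_coe.2
          (Finset.mem_union_left _ (Finset.mem_coe.1 hz)))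
        have hcZ : c ∈ Z := hW₀Z hcW₀
        letI := inducedStructure L Z
        rcases Finset.mem_union.1 hw with hw | hw
        · exact Or.inl (hZ₀ Z hW₀Z w hw hx hw')
        · obtain ⟨i, -, hi⟩ := Finset.mem_image.1 hw
          by_cases hwc : w = c
          · subst hwc
            exact Or.inl (hZ₀ Z hW₀Z w hcW₀ hx hw')
          · refine Or.inr ⟨⟨c, hcZ⟩, hZ₀ Z hW₀Z c hcW₀ hx hcZ, ?_, ?_⟩
            · intro h
              exact hwc (congrArg Subtype.val h).symm
            · have htZ : ∀ j, t j ∈ Z := fun j => hWZ (Finset.mem_coe.2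
                (Finset.mem_union_right _ (Finset.mem_image.2 ⟨j, Finset.mem_univ _, rfl⟩)))
              refine ⟨n, R, fun j => ⟨t j, htZ j⟩, hRt, ?_, ?_⟩
              · obtain ⟨i₀, hi₀⟩ := hct
                exact ⟨i₀, Subtype.ext hi₀⟩
              · exact ⟨i, Subtype.ext hi⟩
  
end Extract

end Gaifman

namespace Gaifman

variable {L : FirstOrder.Language.{u, u}}

section Sentence

variable [L.IsRelational]

/-- The existential closure of `τ` as a sentence. -/
noncomputable def exClosure {k : ℕ} (τ : L.Formula (Fin k)) : L.Sentence :=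
  FirstOrder.Language.Formula.iExs (Fin k) (τ.relabel (Sum.inr : Fin k → Empty ⊕ Fin k))

lemma realize_exClosure {k : ℕ} (τ : L.Formula (Fin k)) (M : Type u) [L.Structure M] :
    M ⊨ exClosure τ ↔ ∃ a : Fin k → M, τ.Realize a := by
  rw [Sentence.Realize, exClosure, Formula.realize_iExs]
  exact exists_congr fun a => by rw [Formula.realize_relabel]; exact Iff.rfl

lemma ballsClass_subset {C : Set (Struc L)} (hher : Hereditary C) (r k : ℕ) :
    BallsClass C r k ⊆ C := by
  rintro T ⟨A, hA, m, hm, a, ⟨g⟩⟩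
  refine hher A hA T ⟨?_⟩
  letI := inducedStructure L (Ball L a r)
  exact (subEmb (Ball L a r)).comp g.toEmbedding

lemma preservedUnderExt_of_subset {C D : Set (Struc L)} (hDC : D ⊆ C) {k : ℕ}
    (τ : L.Formula (Fin k))
    (hpres : ∀ A ∈ C, ∀ B ∈ C, (∃ a : Fin k → A.carrier, τ.Realize a) → SubInd A B →
      ∃ b : Fin k → B.carrier, τ.Realize b) :
    PreservedUnderExt D (exClosure τ) := by
  intro A hA B hB hφ hsub
  rw [realize_exClosure] at hφ ⊢
  exact hpres A (hDC hA) B (hDC hB) hφ hsub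

end Sentence

end Gaifman

namespace Gaifman

variable {L : FirstOrder.Language.{u, u}}

section Main

variable [L.IsRelational] [Finite (Σ n, L.Relations n)]

/-- Main extraction lemma: every model of `∃ x⃗, τ` in `C` contains a small induced
substructure in `C` which is a model of `∃ x⃗, τ`. -/
lemma main_small_model {C : Set (Struc L)} (hher : Hereditary C)
    {k : ℕ} (r : ℕ) (τ : L.Formula (Fin k)) (hτ : IsLocal r τ)
    (n1 : ℕ) (θ1 : L.Formula (Fin n1)) (hθ1 : θ1.IsQF)
    (hEq : ∀ S ∈ BallsClass C r k,
      (S.carrier ⊨ exClosure τ ↔ ∃ b : Fin n1 → S.carrier, θ1.Realize b)) :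
    ∀ S ∈ C, ∀ a : Fin k → S.carrier, τ.Realize a →
      ∃ A : Struc L, A ∈ C ∧ Nonempty (A.carrier ↪[L] S.carrier) ∧
        (∃ a' : Fin k → A.carrier, τ.Realize a') ∧
        Nonempty (A.carrier ↪ Fin (k + n1 * (1 + r * maxAr L))) := by
  classical
  intro S hS a hτa
  letI : L.Structure ↥(Ball L a r) := inducedStructure L (Ball L a r)
  set T : Struc L := ⟨↥(Ball L a r), inducedStructure L (Ball L a r)⟩ with hT
  have hTBalls : T ∈ BallsClass C r k :=
    ⟨S, hS, k, le_rfl, a, ⟨FirstOrder.Language.Equiv.refl L _⟩⟩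
  have hTφ : T.carrier ⊨ exClosure τ := by
    rw [realize_exClosure]
    exact ⟨fun i => ⟨a i, self_mem_ball L a r i⟩, (hτ S.carrier a).1 hτa⟩
  obtain ⟨b, hb⟩ := (hEq T hTBalls).1 hTφ
  have hmem : ∀ j : Fin n1, ∃ i, CloseLE L S.carrier r (a i) ((b j) : S.carrier) := fun j => (b j).2
  choose idx hidx using hmem
  have hext := fun j : Fin n1 => extract r (a (idx j)) ((b j) : S.carrier) (hidx j)
  choose W hxW hyW hcard hMclose hZclose using hext
  set X : Finset S.carrier := (Finset.image a Finset.univ) ∪ Finset.univ.biUnion W with hX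
  have hcardX : X.card ≤ k + n1 * (1 + r * maxAr L) := by
    calc X.card ≤ (Finset.image a Finset.univ).card + (Finset.univ.biUnion W).card :=
          Finset.card_union_le _ _
      _ ≤ k + n1 * (1 + r * maxAr L) := by
          gcongr
          · exact Finset.card_image_le.trans (by simp)
          · calc (Finset.univ.biUnion W).card ≤ ∑ j, (W j).card := Finset.card_biUnion_le
              _ ≤ n1 * (1 + r * maxAr L) := by
                  have := Finset.sum_le_card_nsmul Finset.univ (fun j => (W j).card)
                    (1 + r * maxAr L) (fun j _ => hcard j)
                  simpa [mul_comm] using this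
  set Z : Set S.carrier := (↑X : Set S.carrier) with hZdef
  letI : L.Structure ↥Z := inducedStructure L Z
  set A : Struc L := ⟨↥Z, inducedStructure L Z⟩ with hA
  have haX : ∀ i, a i ∈ X := fun i =>
    Finset.mem_union_left _ (Finset.mem_image.2 ⟨i, Finset.mem_univ _, rfl⟩)
  have hWX : ∀ j, ∀ w ∈ W j, w ∈ X := fun j w hw =>
    Finset.mem_union_right _ (Finset.mem_biUnion.2 ⟨j, Finset.mem_univ _, hw⟩)
  have hbX : ∀ j, ((b j) : S.carrier) ∈ X := fun j => hWX j _ (hyW j)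
  have hAC : A ∈ C := hher S hS A ⟨subEmb Z⟩
  have hZBall : Z ⊆ Ball L a r := by
    intro w hw
    rcases Finset.mem_union.1 hw with hw | hw
    · obtain ⟨i, -, hi⟩ := Finset.mem_image.1 hw
      exact ⟨i, closeLE_of_eq hi r⟩
    · obtain ⟨j, -, hw⟩ := Finset.mem_biUnion.1 hw
      exact ⟨idx j, hMclose j w hw⟩
  have hb₁ : ∃ b₁ : Fin n1 → A.carrier, θ1.Realize b₁ := by
    refine ⟨fun j => ⟨(b j : S.carrier), hbX j⟩, ?_⟩
    have := (qf_realize_emb_formula (inclEmb (L := L) hZBall) hθ1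
      (fun j => ⟨(b j : S.carrier), hbX j⟩)).1
    apply this
    exact hb
  have hABalls : A ∈ BallsClass C r k := by
    refine ⟨A, hAC, k, le_rfl, fun i => ⟨a i, haX i⟩, ⟨equivSetUniv _ ?_⟩⟩
    rintro ⟨w, hw⟩
    rcases Finset.mem_union.1 hw with hw' | hw'
    · obtain ⟨i, -, hi⟩ := Finset.mem_image.1 hw'
      exact ⟨i, closeLE_of_eq (Subtype.ext hi) r⟩
    · obtain ⟨j, -, hw'⟩ := Finset.mem_biUnion.1 hw'
      exact ⟨idx j, hZclose j Z (fun z hz => hWX j z hz) w hw' (haX (idx j)) hw⟩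
  have hAφ : A.carrier ⊨ exClosure τ := (hEq A hABalls).2 hb₁
  rw [realize_exClosure] at hAφ
  refine ⟨A, hAC, ⟨subEmb Z⟩, hAφ, ⟨?_⟩⟩
  exact (X.equivFin).toEmbedding.trans (Fin.castLEEmb hcardX)

end Main

end Gaifman

namespace Gaifman

variable {L : FirstOrder.Language.{u, u}}

section Tables

variable [L.IsRelational] [Finite (Σ n, L.Relations n)]

/-- A table of truth values for all relation symbols on `Fin m`. -/
def TableTy (L : FirstOrder.Language.{u, u}) (m : ℕ) : Type u :=
  ∀ p : (Σ n, L.Relations n), (Fin p.1 → Fin m) → Bool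

instance (m : ℕ) : Finite (TableTy L m) := by
  unfold TableTy; infer_instance

/-- The structure on `ULift (Fin m)` described by a table. -/
def tableStr {m : ℕ} (T : TableTy L m) : L.Structure (ULift.{u} (Fin m)) where
  funMap := fun f _ => isEmptyElim f
  RelMap := fun {n} R t => T ⟨n, R⟩ (fun i => (t i).down) = true

/-- The bundled structure described by a table. -/
def tableStruc {m : ℕ} (T : TableTy L m) : Struc L := ⟨ULift.{u} (Fin m), tableStr T⟩

lemma isQF_foldr_inf {α : Type v} {n : ℕ} (l : List (L.BoundedFormula α n))
    (h : ∀ φ ∈ l, φ.IsQF) : (l.foldr (· ⊓ ·) ⊤).IsQF := by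
  induction l with
  | nil => exact BoundedFormula.IsQF.top
  | cons φ l ih =>
    exact (h φ (List.mem_cons_self)).inf (ih fun ψ hψ => h ψ (List.mem_cons_of_mem _ hψ))

lemma isQF_foldr_sup {α : Type v} {n : ℕ} (l : List (L.BoundedFormula α n))
    (h : ∀ φ ∈ l, φ.IsQF) : (l.foldr (· ⊔ ·) ⊥).IsQF := by
  induction l with
  | nil => exact BoundedFormula.isQF_bot
  | cons φ l ih =>
    exact (h φ (List.mem_cons_self)).sup (ih fun ψ hψ => h ψ (List.mem_cons_of_mem _ hψ))

/-- Conjunction over a finset. -/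
noncomputable def finIInf {α : Type v} {β : Type w} {n : ℕ} (s : Finset β)
    (f : β → L.BoundedFormula α n) : L.BoundedFormula α n :=
  BoundedFormula.iInf (fun b : s => f b)

/-- Disjunction over a finset. -/
noncomputable def finISup {α : Type v} {β : Type w} {n : ℕ} (s : Finset β)
    (f : β → L.BoundedFormula α n) : L.BoundedFormula α n :=
  BoundedFormula.iSup (fun b : s => f b)

lemma realize_finIInf {M : Type u} [L.Structure M] {α : Type v} {β : Type w} {n : ℕ}
    (s : Finset β) (f : β → L.BoundedFormula α n) (v : α → M) (xs : Fin n → M) :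
    (finIInf s f).Realize v xs ↔ ∀ b ∈ s, (f b).Realize v xs := by
  simp [finIInf, BoundedFormula.realize_iInf]

lemma realize_finISup {M : Type u} [L.Structure M] {α : Type v} {β : Type w} {n : ℕ}
    (s : Finset β) (f : β → L.BoundedFormula α n) (v : α → M) (xs : Fin n → M) :
    (finISup s f).Realize v xs ↔ ∃ b ∈ s, (f b).Realize v xs := by
  simp [finISup, BoundedFormula.realize_iSup]

lemma isQF_iInf {α : Type v} {β : Type w} {n : ℕ} (s : Finset β)
    (f : β → L.BoundedFormula α n) (h : ∀ b ∈ s, (f b).IsQF) :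
    (finIInf s f).IsQF := by
  unfold finIInf BoundedFormula.iInf
  apply isQF_foldr_inf
  intro φ hφ
  obtain ⟨b, hb, rfl⟩ := List.mem_map.1 hφ
  exact h b b.2

lemma isQF_iSup {α : Type v} {β : Type w} {n : ℕ} (s : Finset β)
    (f : β → L.BoundedFormula α n) (h : ∀ b ∈ s, (f b).IsQF) :
    (finISup s f).IsQF := by
  unfold finISup BoundedFormula.iSup
  apply isQF_foldr_sup
  intro φ hφ
  obtain ⟨b, hb, rfl⟩ := List.mem_map.1 hφ
  exact h b b.2

/-- The atomic formula asserting relation `q.1.2` on the variables given by `q.2`. -/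
def relAtom {N m : ℕ} (hm : m ≤ N) (q : Σ p : (Σ n, L.Relations n), Fin p.1 → Fin m) :
    L.BoundedFormula (Fin N) 0 :=
  BoundedFormula.rel q.1.2 (fun i => Term.var (Sum.inl (Fin.castLE hm (q.2 i))))

/-- The diagram formula of a table. -/
noncomputable def diag (N m : ℕ) (hm : m ≤ N) (T : TableTy L m) : L.Formula (Fin N) :=
  letI : Fintype (Σ n, L.Relations n) := Fintype.ofFinite _
  letI : DecidableEq (Σ n, L.Relations n) := Classical.decEq _
  (finIInf (Finset.univ.filter fun p : Fin m × Fin m => p.1 ≠ p.2)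
    (fun p => BoundedFormula.not
      (Term.bdEqual (Term.var (Sum.inl (Fin.castLE hm p.1)))
        (Term.var (Sum.inl (Fin.castLE hm p.2)))))) ⊓
  (finIInf (Finset.univ : Finset (Σ p : (Σ n, L.Relations n), Fin p.1 → Fin m))
    (fun q => if T q.1 q.2 then relAtom hm q else BoundedFormula.not (relAtom hm q)))

lemma isQF_diag {N m : ℕ} (hm : m ≤ N) (T : TableTy L m) : (diag N m hm T).IsQF := by
  refine BoundedFormula.IsQF.inf (isQF_iInf _ _ fun p _ => ?_) (isQF_iInf _ _ fun q _ => ?_)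
  · exact (FirstOrder.Language.BoundedFormula.IsAtomic.equal _ _).isQF.not
  · by_cases h : T q.1 q.2 <;>
      simp only [h, if_true, if_false] <;>
      first
        | exact (FirstOrder.Language.BoundedFormula.IsAtomic.rel _ _).isQF
        | exact (FirstOrder.Language.BoundedFormula.IsAtomic.rel _ _).isQF.not

lemma realize_diag {M : Type u} [L.Structure M] {N m : ℕ} (hm : m ≤ N) (T : TableTy L m)
    (b : Fin N → M) :
    (diag N m hm T).Realize b ↔
      ((∀ p : Fin m × Fin m, p.1 ≠ p.2 → b (Fin.castLE hm p.1) ≠ b (Fin.castLE hm p.2)) ∧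
       ∀ q : (Σ p : (Σ n, L.Relations n), Fin p.1 → Fin m),
         (Structure.RelMap q.1.2 (fun i => b (Fin.castLE hm (q.2 i))) ↔ T q.1 q.2 = true)) := by
  letI : Fintype (Σ n, L.Relations n) := Fintype.ofFinite _
  letI : DecidableEq (Σ n, L.Relations n) := Classical.decEq _
  rw [diag]
  show BoundedFormula.Realize _ b default ↔ _
  rw [BoundedFormula.realize_inf]
  apply and_congr
  · rw [realize_finIInf]
    constructor
    · intro h p hp
      have := h p (Finset.mem_filter.2 ⟨Finset.mem_univ _, hp⟩)
      simpa [BoundedFormula.realize_not, BoundedFormula.realize_bdEqual] using this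
    · intro h p hp
      have := h p (Finset.mem_filter.1 hp).2
      simpa [BoundedFormula.realize_not, BoundedFormula.realize_bdEqual] using this
  · rw [realize_finIInf]
    refine ⟨fun h q => ?_, fun h q _ => ?_⟩
    · have := h q (Finset.mem_univ _)
      by_cases hq : T q.1 q.2 = true
      · simp only [hq, if_true] at this
        simp only [hq, iff_true]
        exact this
      · simp only [Bool.not_eq_true] at hq
        simp only [hq, Bool.false_eq_true, if_false] at this
        simp only [hq, Bool.false_eq_true, iff_false]
        exact this
    · have := h q
      by_cases hq : T q.1 q.2 = true
      · simp only [hq, iff_true] at this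
        simp only [hq, if_true]
        exact this
      · simp only [Bool.not_eq_true] at hq
        simp only [hq, Bool.false_eq_true, iff_false] at this
        simp only [hq, Bool.false_eq_true, if_false]
        exact this

/-- From a realized diagram we obtain an embedded copy of the table structure. -/
lemma embedding_of_realize_diag {M : Type u} [L.Structure M] {N m : ℕ} (hm : m ≤ N)
    (T : TableTy L m) (b : Fin N → M) (h : (diag N m hm T).Realize b) :
    Nonempty ((tableStruc T).carrier ↪[L] M) := by
  rw [realize_diag] at h
  obtain ⟨h1, h2⟩ := h
  refine ⟨{ toFun := fun i => b (Fin.castLE hm i.down),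
            inj' := ?_,
            map_fun' := fun f => isEmptyElim f,
            map_rel' := ?_ }⟩
  · intro i j hij
    by_contra hne
    exact h1 (i.down, j.down) (fun hd => hne (ULift.ext _ _ hd)) hij
  · intro n R x
    exact h2 ⟨⟨n, R⟩, fun i => (x i).down⟩

/-- Any small structure embedded in `M` gives a table whose diagram is realized in `M`. -/
lemma realize_diag_of_model {M : Type u} [L.Structure M] {N m : ℕ} (hm : m ≤ N) (hm0 : 0 < m)
    (A : Struc L) (g : A.carrier ≃ Fin m) (e : A.carrier ↪[L] M) :
    ∃ T : TableTy L m, Nonempty ((tableStruc T).carrier ≃[L] A.carrier) ∧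
      ∃ b : Fin N → M, (diag N m hm T).Realize b := by
  classical
  refine ⟨fun p t => decide (Structure.RelMap p.2 (fun i => g.symm (t i))), ?_, ?_⟩
  · refine ⟨{ toEquiv := Equiv.ulift.trans g.symm,
              map_fun' := fun f => isEmptyElim f,
              map_rel' := ?_ }⟩
    intro n R x
    show Structure.RelMap R _ ↔ (decide (Structure.RelMap R _) = true)
    rw [decide_eq_true_eq]
    exact Iff.rfl
  · refine ⟨fun i => if h : (i : ℕ) < m then e (g.symm ⟨i, h⟩) else e (g.symm ⟨0, hm0⟩), ?_⟩
    have hb : ∀ i : Fin m,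
        (if h : ((Fin.castLE hm i : Fin N) : ℕ) < m then e (g.symm ⟨(Fin.castLE hm i : Fin N), h⟩)
          else e (g.symm ⟨0, hm0⟩)) = e (g.symm i) := by
      intro i
      rw [dif_pos (show ((Fin.castLE hm i : Fin N) : ℕ) < m from i.isLt)]
      exact congrArg (fun z => e (g.symm z)) (Fin.ext rfl)
    refine (realize_diag hm _ _).2 ?_
    constructor
    · intro p hp heq
      rw [hb p.1, hb p.2] at heq
      exact hp (g.symm.injective (e.injective heq))
    · intro q
      have : (fun i => if h : ((Fin.castLE hm (q.2 i) : Fin N) : ℕ) < m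
          then e (g.symm ⟨(Fin.castLE hm (q.2 i) : Fin N), h⟩) else e (g.symm ⟨0, hm0⟩))
          = fun i => e (g.symm (q.2 i)) := funext fun i => hb (q.2 i)
      rw [this]
      rw [decide_eq_true_eq]
      exact e.map_rel _ _

end Tables

end Gaifman

/-- **Existential local preservation under extensions.** Let `C` be a hereditary class of
finite structures such that preservation under extensions holds over `Balls(C,r,k)` for all
`r, k ≥ 0`. Then every existential local sentence `∃ x⃗, τ(x⃗)` preserved under extensions over
`C` is equivalent over `C` to an existential sentence. -/
theorem exist_local_preservation_under_extensions (L : FirstOrder.Language.{u, u})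
    [L.IsRelational] [Finite (Σ n, L.Relations n)] (C : Set (Struc L))
    (hfin : ∀ A ∈ C, Finite A.carrier) (hher : Hereditary C)
    (hballs : ∀ r k : ℕ, PresExtHolds (BallsClass C r k))
    {k : ℕ} (r : ℕ) (τ : L.Formula (Fin k)) (hτ : IsLocal r τ)
    (hpres : ∀ A ∈ C, ∀ B ∈ C, (∃ a : Fin k → A.carrier, τ.Realize a) → SubInd A B →
      ∃ b : Fin k → B.carrier, τ.Realize b) :
    ∃ (n : ℕ) (θ : L.Formula (Fin n)), θ.IsQF ∧
      ∀ S ∈ C, ((∃ a : Fin k → S.carrier, τ.Realize a) ↔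
        ∃ b : Fin n → S.carrier, θ.Realize b) := by
  classical
  rcases Nat.eq_zero_or_pos k with hk | hk
  · -- the degenerate case `k = 0`
    subst hk
    obtain ⟨nD, θD, hθDQF, hθDEq⟩ := hballs r 0 (exClosure τ)
      (preservedUnderExt_of_subset (ballsClass_subset hher r 0) τ hpres)
    have key : ∀ S ∈ C, ∃ T : Struc L, IsEmpty T.carrier ∧
        Nonempty (T.carrier ↪[L] S.carrier) ∧
        ((∃ a : Fin 0 → S.carrier, τ.Realize a) ↔
          ∃ b : Fin nD → T.carrier, θD.Realize b) := by
      intro S hS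
      set a₀ : Fin 0 → S.carrier := fun i => i.elim0 with ha₀
      letI := inducedStructure L (Ball L a₀ r)
      set T : Struc L := ⟨↥(Ball L a₀ r), inducedStructure L (Ball L a₀ r)⟩ with hT
      have hTmem : T ∈ BallsClass C r 0 :=
        ⟨S, hS, 0, le_rfl, a₀, ⟨FirstOrder.Language.Equiv.refl L _⟩⟩
      have h1 : (∃ a : Fin 0 → S.carrier, τ.Realize a) ↔ T.carrier ⊨ exClosure τ := by
        rw [realize_exClosure]
        constructor
        · rintro ⟨a, ha⟩
          rw [show a = a₀ from funext fun i => i.elim0] at ha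
          exact ⟨_, (hτ S.carrier a₀).1 ha⟩
        · rintro ⟨c, hc⟩
          refine ⟨a₀, (hτ S.carrier a₀).2 ?_⟩
          rw [show (fun i => (⟨a₀ i, self_mem_ball L a₀ r i⟩ : Ball L a₀ r)) = c from
            funext fun i => i.elim0]
          exact hc
      refine ⟨T, ⟨fun x => ?_⟩, ⟨subEmb (Ball L a₀ r)⟩, h1.trans (hθDEq T hTmem)⟩
      obtain ⟨i, -⟩ := x.2
      exact i.elim0
    rcases nD with _ | d
    · refine ⟨0, θD, hθDQF, ?_⟩
      intro S hS
      obtain ⟨T, -, ⟨j⟩, hiff⟩ := key S hS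
      rw [hiff]
      constructor
      · rintro ⟨b, hb⟩
        refine ⟨fun i => i.elim0, ?_⟩
        have := (qf_realize_emb_formula j hθDQF b).2 hb
        rw [show (⇑j ∘ b) = (fun i : Fin 0 => i.elim0) from funext fun i => i.elim0] at this
        exact this
      · rintro ⟨b, hb⟩
        refine ⟨fun i => i.elim0, ?_⟩
        apply (qf_realize_emb_formula j hθDQF _).1
        rw [show (⇑j ∘ (fun i : Fin 0 => i.elim0)) = b from funext fun i => i.elim0]
        exact hb
    · refine ⟨0, ⊥, BoundedFormula.isQF_bot, ?_⟩
      intro S hS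
      constructor
      · intro h
        obtain ⟨T, hTe, -, hiff⟩ := key S hS
        obtain ⟨b, -⟩ := hiff.1 h
        exact (hTe.false (b 0)).elim
      · rintro ⟨b, hb⟩
        simp [Formula.Realize] at hb
  · -- the main case `k ≥ 1`
    obtain ⟨n1, θ1, hθ1QF, hθ1Eq⟩ := hballs r k (exClosure τ)
      (preservedUnderExt_of_subset (ballsClass_subset hher r k) τ hpres)
    have hmain := main_small_model hher r τ hτ n1 θ1 hθ1QF hθ1Eq
    set N : ℕ := k + n1 * (1 + r * maxAr L) with hN
    letI : Fintype (Σ m : Fin (N + 1), TableTy L m.1) := Fintype.ofFinite _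
    set Good : (Σ m : Fin (N + 1), TableTy L m.1) → Prop := fun q =>
      (tableStruc q.2) ∈ C ∧ ∃ a : Fin k → (tableStruc q.2).carrier, τ.Realize a with hGoodDef
    refine ⟨N, finISup (Finset.univ.filter Good)
      (fun q => diag N q.1.1 (Nat.lt_succ_iff.1 q.1.isLt) q.2),
      isQF_iSup _ _ (fun q _ => isQF_diag _ _), ?_⟩
    intro S hS
    constructor
    · rintro ⟨a, ha⟩
      obtain ⟨A, hAC, ⟨j⟩, ⟨a₂, ha₂⟩, ⟨emb⟩⟩ := hmain S hS a ha
      haveI : Finite A.carrier := Finite.of_injective emb emb.injective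
      haveI := Fintype.ofFinite A.carrier
      have hmN : Fintype.card A.carrier ≤ N := by
        simpa using Fintype.card_le_of_embedding emb
      have hm0 : 0 < Fintype.card A.carrier := Fintype.card_pos_iff.2 ⟨a₂ ⟨0, hk⟩⟩
      obtain ⟨T, ⟨gIso⟩, b, hb⟩ :=
        realize_diag_of_model hmN hm0 A (Fintype.equivFin A.carrier) j
      have hGood : Good ⟨⟨Fintype.card A.carrier, Nat.lt_succ_of_le hmN⟩, T⟩ := by
        constructor
        · exact hher A hAC _ ⟨gIso.toEmbedding⟩
        · refine ⟨fun i => gIso.symm (a₂ i), ?_⟩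
          apply (FirstOrder.Language.StrongHomClass.realize_formula gIso (φ := τ)).1
          rw [show (⇑gIso ∘ fun i => gIso.symm (a₂ i)) = a₂ from
            funext fun i => gIso.apply_symm_apply (a₂ i)]
          exact ha₂
      refine ⟨b, ?_⟩
      show BoundedFormula.Realize _ b default
      rw [realize_finISup]
      exact ⟨⟨⟨Fintype.card A.carrier, Nat.lt_succ_of_le hmN⟩, T⟩,
        Finset.mem_filter.2 ⟨Finset.mem_univ _, hGood⟩, hb⟩
    · rintro ⟨b, hb⟩
      have hb' : BoundedFormula.Realize (finISup (Finset.univ.filter Good)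
        (fun q => diag N q.1.1 (Nat.lt_succ_iff.1 q.1.isLt) q.2)) b default := hb
      rw [realize_finISup] at hb'
      obtain ⟨q, hqmem, hq⟩ := hb'
      have hGood := (Finset.mem_filter.1 hqmem).2
      obtain ⟨e⟩ := embedding_of_realize_diag _ q.2 b hq
      exact hpres (tableStruc q.2) hGood.1 S hS hGood.2 ⟨e⟩
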